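/- Fix s ∈ (0,1) and let f ∈ W^{1,1}(R^n) ∩ W^{1,∞}(R^n) be nonzero. There exists a constant M > 0, independent of p, such that for all sufficiently large p, ‖ξ‖_{Π*,s_p f} ≤ M for almost every ξ ∈ S^{n−1}. -/

import Mathlib

open MeasureTheory Set NNReal ENNReal

private lemma aux_rpow_le {a b p : ℝ} (ha : 0 ≤ a) (hab : a ≤ b) (hp : 1 ≤ p) :
    a ^ p ≤ b ^ (p - 1) * a := by
  rcases eq_or_lt_of_le ha with h | h
  · rw [← h, Real.zero_rpow (by linarith : p ≠ 0), mul_zero]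
  · have h1 : a ^ p = a ^ (p - 1) * a := by
      rw [← Real.rpow_add_one h.ne' (p - 1), sub_add_cancel]
    rw [h1]
    exact mul_le_mul_of_nonneg_right (Real.rpow_le_rpow ha hab (by linarith)) ha

/-- A Lipschitz integrable function is (everywhere) bounded. -/
private lemma aux_bounded {n : ℕ} (f : EuclideanSpace ℝ (Fin n) → ℝ) (L : ℝ≥0)
    (hf1 : Integrable f) (hlip : LipschitzWith L f) :
    ∃ C : ℝ, 0 ≤ C ∧ ∀ x, |f x| ≤ C := by
  set A : ℝ := ∫ x, |f x| with hA
  have hA0 : 0 ≤ A := integral_nonneg fun x => abs_nonneg _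
  have hAeq : ∫⁻ x, ENNReal.ofReal |f x| = ENNReal.ofReal A :=
    (ofReal_integral_eq_lintegral_ofReal hf1.abs (ae_of_all _ fun x => abs_nonneg _)).symm
  set r₀ : ℝ := 1 / (2 * ((L : ℝ) + 1)) with hr₀
  have hr₀pos : 0 < r₀ := by positivity
  set V : ℝ≥0∞ := volume (Metric.ball (0 : EuclideanSpace ℝ (Fin n)) r₀) with hV
  have hV0 : 0 < V := Metric.measure_ball_pos _ _ hr₀pos
  have hVt : V < ⊤ := measure_ball_lt_top
  by_contra hcon
  push_neg at hcon
  obtain ⟨x, hx⟩ := hcon (max 1 (2 * A / V.toReal + 1)) (le_trans zero_le_one (le_max_left _ _))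
  set C : ℝ := max 1 (2 * A / V.toReal + 1) with hC
  have hC1 : (1 : ℝ) ≤ C := le_max_left _ _
  have hball : ∀ y ∈ Metric.ball x r₀, C / 2 ≤ |f y| := by
    intro y hy
    have hd : dist (f y) (f x) ≤ (L : ℝ) * dist y x := hlip.dist_le_mul y x
    have hdy : dist y x < r₀ := Metric.mem_ball.1 hy
    have hL : (L : ℝ) * dist y x ≤ ((L : ℝ) + 1) * r₀ := by
      have := dist_nonneg (x := y) (y := x)
      nlinarith [L.coe_nonneg]
    have hhalf : ((L : ℝ) + 1) * r₀ = 1 / 2 := by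
      rw [hr₀]; field_simp
    have h2 : |f x| - |f y| ≤ |f y - f x| := by
      rw [abs_sub_comm]; exact abs_sub_abs_le_abs_sub _ _
    have habs : |f y - f x| ≤ 1 / 2 := by
      rw [← Real.dist_eq]; linarith
    have : C < |f x| := hx
    linarith
  have key : ENNReal.ofReal (C / 2) * V ≤ ENNReal.ofReal A := by
    have h1 : ENNReal.ofReal (C / 2) * V
        = ∫⁻ _ in Metric.ball x r₀, ENNReal.ofReal (C / 2) := by
      rw [setLIntegral_const, Measure.addHaar_ball_center]
    rw [h1, ← hAeq]
    calc ∫⁻ _ in Metric.ball x r₀, ENNReal.ofReal (C / 2)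
        ≤ ∫⁻ y in Metric.ball x r₀, ENNReal.ofReal |f y| := by
          refine setLIntegral_mono (hlip.continuous.abs.measurable.ennreal_ofReal) ?_
          exact fun y hy => ENNReal.ofReal_le_ofReal (hball y hy)
      _ ≤ ∫⁻ y, ENNReal.ofReal |f y| := setLIntegral_le_lintegral _ _
  have hreal : C / 2 * V.toReal ≤ A := by
    have := ENNReal.toReal_mono (by simp) key
    rwa [ENNReal.toReal_mul, ENNReal.toReal_ofReal (by linarith),
      ENNReal.toReal_ofReal hA0] at this
  have hVr : 0 < V.toReal := ENNReal.toReal_pos hV0.ne' hVt.ne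
  have hC2 : 2 * A / V.toReal + 1 ≤ C := le_max_right _ _
  rw [div_add' _ _ _ hVr.ne', div_le_iff₀ hVr] at hC2
  nlinarith

set_option maxHeartbeats 1000000 in
/-- Fix `s ∈ (0,1)` and let `f ∈ W^{1,1}(ℝⁿ) ∩ W^{1,∞}(ℝⁿ)` be
nonzero. There exists `M > 0`, independent of `p`, such that for all sufficiently large
`p`, the gauge `‖ξ‖_{Π^{*,s}_p f}` is at most `M` for almost every `ξ ∈ S^{n−1}`
(with respect to the spherical measure). -/
theorem gauge_uniform_bound_in_p {n : ℕ}
    (f : EuclideanSpace ℝ (Fin n) → ℝ) (L : ℝ≥0)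
    (hf1 : Integrable f) (hlip : LipschitzWith L f) (hd : Differentiable ℝ f)
    (hg1 : Integrable (fun x => fderiv ℝ f x)) (hne : f ≠ 0)
    (s : ℝ) (hs : s ∈ Ioo (0:ℝ) 1) :
    ∃ M > (0:ℝ), ∃ p₀ : ℝ, ∀ p ≥ p₀,
      ∀ᵐ (ξ : Metric.sphere (0 : EuclideanSpace ℝ (Fin n)) 1)
          ∂(volume : Measure (EuclideanSpace ℝ (Fin n))).toSphere,
        (ENNReal.ofReal (p * (1 - s)) *
            ∫⁻ t in Ioi (0:ℝ), ENNReal.ofReal (t ^ (-s * p - 1)) *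
              ∫⁻ x, ENNReal.ofReal
                (|f (x + t • (ξ : EuclideanSpace ℝ (Fin n))) - f x| ^ p)) ^ (1 / (s * p))
          ≤ ENNReal.ofReal M := by
  obtain ⟨hs0, hs1⟩ := hs
  obtain ⟨C, hC0, hC⟩ := aux_bounded f L hf1 hlip
  set A : ℝ := ∫ x, |f x| with hAdef
  have hA0 : 0 ≤ A := integral_nonneg fun x => abs_nonneg _
  have hAeq : ∫⁻ x, ENNReal.ofReal |f x| = ENNReal.ofReal A :=
    (ofReal_integral_eq_lintegral_ofReal hf1.abs (ae_of_all _ fun x => abs_nonneg _)).symm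
  -- translation bound
  have hT : ∀ v : EuclideanSpace ℝ (Fin n),
      ∫⁻ x, ENNReal.ofReal |f (x + v) - f x| ≤ ENNReal.ofReal (2 * A) := by
    intro v
    have hmble : Measurable fun x : EuclideanSpace ℝ (Fin n) => ENNReal.ofReal |f (x + v)| :=
      ((hlip.continuous.comp (continuous_id.add continuous_const)).abs.measurable).ennreal_ofReal
    calc ∫⁻ x, ENNReal.ofReal |f (x + v) - f x|
        ≤ ∫⁻ x, (ENNReal.ofReal |f (x + v)| + ENNReal.ofReal |f x|) := by
          refine lintegral_mono fun x => ?_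
          rw [← ENNReal.ofReal_add (abs_nonneg _) (abs_nonneg _)]
          exact ENNReal.ofReal_le_ofReal (abs_sub _ _)
      _ = (∫⁻ x, ENNReal.ofReal |f (x + v)|) + ∫⁻ x, ENNReal.ofReal |f x| :=
          lintegral_add_left' hmble.aemeasurable _
      _ = ENNReal.ofReal A + ENNReal.ofReal A := by
          rw [lintegral_add_right_eq_self (fun x => ENNReal.ofReal |f x|) v, hAeq]
      _ = ENNReal.ofReal (2 * A) := by
          rw [← ENNReal.ofReal_add hA0 hA0]; ring_nf
  set B : ℝ := max (max (L : ℝ) (2 * C)) 1 with hBdef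
  have hB1 : (1 : ℝ) ≤ B := le_max_right _ _
  have hBL : (L : ℝ) ≤ B := le_trans (le_max_left _ _) (le_max_left _ _)
  have hBC : 2 * C ≤ B := le_trans (le_max_right _ _) (le_max_left _ _)
  set K : ℝ := 4 * A + 2 * A * (1 - s) / s + 1 with hKdef
  have hK1 : (1 : ℝ) ≤ K := by
    have h1 : 0 ≤ 2 * A * (1 - s) / s := div_nonneg (by nlinarith) hs0.le
    rw [hKdef]; linarith
  refine ⟨K * B ^ (1 / s), mul_pos (by linarith) (Real.rpow_pos_of_pos (by linarith) _), max (2 / (1 - s)) (1 / s), fun p hp => ?_⟩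
  have hp2 : 2 / (1 - s) ≤ p := le_trans (le_max_left _ _) hp
  have hps : 1 / s ≤ p := le_trans (le_max_right _ _) hp
  have hp1s : 2 ≤ p * (1 - s) := by
    rw [div_le_iff₀ (by linarith)] at hp2; linarith
  have hsp1 : 1 ≤ s * p := by
    rw [div_le_iff₀ hs0] at hps; linarith
  have hp1 : 1 ≤ p := by nlinarith
  have hppos : 0 < p := by linarith
  refine Filter.Eventually.of_forall fun ξ => ?_
  have hξ : ‖(ξ : EuclideanSpace ℝ (Fin n))‖ = 1 := by
    have := ξ.2
    rwa [mem_sphere_zero_iff_norm] at this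
  set q : ℝ := p * (1 - s) - 2 with hqdef
  have hq0 : 0 ≤ q := by linarith
  set D1 : ℝ := 2 * A * (L : ℝ) ^ (p - 1) with hD1def
  set D2 : ℝ := 2 * A * (2 * C) ^ (p - 1) with hD2def
  have hD10 : 0 ≤ D1 := by positivity
  have hD20 : 0 ≤ D2 := by positivity
  -- inner integral bound
  have hI : ∀ t : ℝ, 0 < t →
      (∫⁻ x, ENNReal.ofReal (|f (x + t • (ξ : EuclideanSpace ℝ (Fin n))) - f x| ^ p))
        ≤ ENNReal.ofReal (min ((L : ℝ) * t) (2 * C) ^ (p - 1) * (2 * A)) := by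
    intro t ht
    set m : ℝ := min ((L : ℝ) * t) (2 * C) with hmdef
    have hm0 : 0 ≤ m := le_min (by positivity) (by linarith)
    have hbd : ∀ x : EuclideanSpace ℝ (Fin n),
        |f (x + t • (ξ : EuclideanSpace ℝ (Fin n))) - f x| ≤ m := by
      intro x
      refine le_min ?_ ?_
      · have h2 := hlip.dist_le_mul (x + t • (ξ : EuclideanSpace ℝ (Fin n))) x
        rw [Real.dist_eq] at h2
        refine le_trans h2 (le_of_eq ?_)
        rw [dist_eq_norm, add_sub_cancel_left, norm_smul, hξ, Real.norm_eq_abs,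
          abs_of_pos ht, mul_one]
      · calc |f (x + t • (ξ : EuclideanSpace ℝ (Fin n))) - f x|
            ≤ |f (x + t • (ξ : EuclideanSpace ℝ (Fin n)))| + |f x| := abs_sub _ _
          _ ≤ C + C := add_le_add (hC _) (hC _)
          _ = 2 * C := by ring
    calc (∫⁻ x, ENNReal.ofReal (|f (x + t • (ξ : EuclideanSpace ℝ (Fin n))) - f x| ^ p))
        ≤ ∫⁻ x, ENNReal.ofReal (m ^ (p - 1)) *
            ENNReal.ofReal |f (x + t • (ξ : EuclideanSpace ℝ (Fin n))) - f x| := by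
          refine lintegral_mono fun x => ?_
          rw [← ENNReal.ofReal_mul (by positivity)]
          exact ENNReal.ofReal_le_ofReal (aux_rpow_le (abs_nonneg _) (hbd x) hp1)
      _ = ENNReal.ofReal (m ^ (p - 1)) *
            ∫⁻ x, ENNReal.ofReal |f (x + t • (ξ : EuclideanSpace ℝ (Fin n))) - f x| :=
          lintegral_const_mul' _ _ ENNReal.ofReal_ne_top
      _ ≤ ENNReal.ofReal (m ^ (p - 1)) * ENNReal.ofReal (2 * A) :=
          mul_le_mul_right (hT _) _
      _ = ENNReal.ofReal (m ^ (p - 1) * (2 * A)) := by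
          rw [← ENNReal.ofReal_mul (by positivity)]
  -- outer integral split and bound
  have houter : (∫⁻ t in Ioi (0:ℝ), ENNReal.ofReal (t ^ (-s * p - 1)) *
        ∫⁻ x, ENNReal.ofReal (|f (x + t • (ξ : EuclideanSpace ℝ (Fin n))) - f x| ^ p))
      ≤ ENNReal.ofReal (D1 / (q + 1)) + ENNReal.ofReal (D2 / (s * p)) := by
    rw [← Ioc_union_Ioi_eq_Ioi (zero_le_one (α := ℝ)),
      lintegral_union measurableSet_Ioi (Ioc_disjoint_Ioi le_rfl)]
    have hm1 : Measurable fun t : ℝ => ENNReal.ofReal (D1 * t ^ q) :=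
      ((measurable_id.pow_const q).const_mul D1).ennreal_ofReal
    have hm2 : Measurable fun t : ℝ => ENNReal.ofReal (D2 * t ^ (-s * p - 1)) :=
      ((measurable_id.pow_const _).const_mul D2).ennreal_ofReal
    refine add_le_add (le_trans (setLIntegral_mono hm1 ?_) ?_)
      (le_trans (setLIntegral_mono hm2 ?_) ?_)
    · -- pointwise bound on Ioc 0 1
      intro t ht
      obtain ⟨ht0, _⟩ := ht
      refine le_trans (mul_le_mul_right (hI t ht0) _) ?_
      rw [← ENNReal.ofReal_mul (by positivity)]
      refine ENNReal.ofReal_le_ofReal ?_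
      have hmin : min ((L : ℝ) * t) (2 * C) ^ (p - 1) ≤ ((L : ℝ) * t) ^ (p - 1) :=
        Real.rpow_le_rpow (le_min (by positivity) (by linarith)) (min_le_left _ _)
          (by linarith)
      have htpow : (0:ℝ) ≤ t ^ (-s * p - 1) := Real.rpow_nonneg ht0.le _
      have hexp : t ^ (-s * p - 1) * t ^ (p - 1) = t ^ q := by
        rw [← Real.rpow_add ht0]; congr 1; rw [hqdef]; ring
      calc t ^ (-s * p - 1) * (min ((L : ℝ) * t) (2 * C) ^ (p - 1) * (2 * A))
          ≤ t ^ (-s * p - 1) * (((L : ℝ) * t) ^ (p - 1) * (2 * A)) := by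
            gcongr
        _ = D1 * t ^ q := by
            rw [Real.mul_rpow L.coe_nonneg ht0.le, hD1def, ← hexp]; ring
    · -- value of integral on Ioc 0 1
      have hbase0 : IntegrableOn (fun t : ℝ => t ^ q) (Ioc 0 1) :=
        (intervalIntegrable_iff_integrableOn_Ioc_of_le zero_le_one).1
          (intervalIntegral.intervalIntegrable_rpow' (by linarith))
      have hint : IntegrableOn (fun t : ℝ => D1 * t ^ q) (Ioc 0 1) :=
        hbase0.const_mul D1
      have hnn : 0 ≤ᵐ[volume.restrict (Ioc (0:ℝ) 1)] fun t : ℝ => D1 * t ^ q := by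
        refine (ae_restrict_iff' measurableSet_Ioc).2 (ae_of_all _ fun t ht => ?_)
        have := Real.rpow_nonneg ht.1.le q
        positivity
      rw [← ofReal_integral_eq_lintegral_ofReal hint hnn]
      refine ENNReal.ofReal_le_ofReal (le_of_eq ?_)
      rw [MeasureTheory.integral_const_mul, ← intervalIntegral.integral_of_le zero_le_one,
        integral_rpow (Or.inl (by linarith)), Real.one_rpow,
        Real.zero_rpow (by linarith : q + 1 ≠ 0)]
      ring
    · -- pointwise bound on Ioi 1
      intro t ht
      have ht0 : (0:ℝ) < t := lt_trans zero_lt_one ht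
      refine le_trans (mul_le_mul_right (hI t ht0) _) ?_
      rw [← ENNReal.ofReal_mul (by positivity)]
      refine ENNReal.ofReal_le_ofReal ?_
      have hmin : min ((L : ℝ) * t) (2 * C) ^ (p - 1) ≤ (2 * C) ^ (p - 1) :=
        Real.rpow_le_rpow (le_min (by positivity) (by linarith)) (min_le_right _ _)
          (by linarith)
      have htpow : (0:ℝ) ≤ t ^ (-s * p - 1) := Real.rpow_nonneg ht0.le _
      calc t ^ (-s * p - 1) * (min ((L : ℝ) * t) (2 * C) ^ (p - 1) * (2 * A))
          ≤ t ^ (-s * p - 1) * ((2 * C) ^ (p - 1) * (2 * A)) := by gcongr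
        _ = D2 * t ^ (-s * p - 1) := by rw [hD2def]; ring
    · -- value of integral on Ioi 1
      have hlt : -s * p - 1 < -1 := by nlinarith
      have hint : IntegrableOn (fun t : ℝ => D2 * t ^ (-s * p - 1)) (Ioi 1) :=
        (integrableOn_Ioi_rpow_of_lt hlt zero_lt_one).const_mul D2
      have hnn : 0 ≤ᵐ[volume.restrict (Ioi (1:ℝ))] fun t : ℝ => D2 * t ^ (-s * p - 1) := by
        refine (ae_restrict_iff' measurableSet_Ioi).2 (ae_of_all _ fun t ht => ?_)
        have := Real.rpow_nonneg (le_trans zero_le_one ht.le) (-s * p - 1)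
        positivity
      rw [← ofReal_integral_eq_lintegral_ofReal hint hnn]
      refine ENNReal.ofReal_le_ofReal (le_of_eq ?_)
      rw [MeasureTheory.integral_const_mul, integral_Ioi_rpow_of_lt hlt zero_lt_one,
        Real.one_rpow]
      field_simp
      ring
  -- assemble
  have hbase : ENNReal.ofReal (p * (1 - s)) *
      (∫⁻ t in Ioi (0:ℝ), ENNReal.ofReal (t ^ (-s * p - 1)) *
        ∫⁻ x, ENNReal.ofReal (|f (x + t • (ξ : EuclideanSpace ℝ (Fin n))) - f x| ^ p))
      ≤ ENNReal.ofReal (K * B ^ p) := by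
    refine le_trans (mul_le_mul_right houter _) ?_
    rw [← ENNReal.ofReal_add (by positivity) (by positivity),
      ← ENNReal.ofReal_mul (by positivity)]
    refine ENNReal.ofReal_le_ofReal ?_
    have hq1 : (1:ℝ) ≤ q + 1 := by linarith
    have hBpow : (0:ℝ) < B ^ (p - 1) := Real.rpow_pos_of_pos (by linarith) _
    have hL1 : (L : ℝ) ^ (p - 1) ≤ B ^ (p - 1) :=
      Real.rpow_le_rpow L.coe_nonneg hBL (by linarith)
    have hC1 : (2 * C) ^ (p - 1) ≤ B ^ (p - 1) :=
      Real.rpow_le_rpow (by linarith) hBC (by linarith)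
    have hstep1 : p * (1 - s) * (D1 / (q + 1)) ≤ 4 * A * B ^ (p - 1) := by
      rw [mul_div_assoc']
      rw [div_le_iff₀ (by linarith : (0:ℝ) < q + 1)]
      have e1 : p * (1 - s) ≤ 2 * (q + 1) := by rw [hqdef]; linarith
      have e2 : D1 ≤ 2 * A * B ^ (p - 1) := by
        rw [hD1def]; nlinarith
      nlinarith [Real.rpow_nonneg (L.coe_nonneg) (p-1)]
    have hstep2 : p * (1 - s) * (D2 / (s * p)) ≤ 2 * A * (1 - s) / s * B ^ (p - 1) := by
      have e0 : p * (1 - s) * (D2 / (s * p)) = (1 - s) / s * D2 := by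
        field_simp
      rw [e0]
      have e2 : D2 ≤ 2 * A * B ^ (p - 1) := by
        rw [hD2def]; nlinarith
      have : (0:ℝ) ≤ (1 - s) / s := div_nonneg (by linarith) hs0.le
      calc (1 - s) / s * D2 ≤ (1 - s) / s * (2 * A * B ^ (p - 1)) := by nlinarith
        _ = 2 * A * (1 - s) / s * B ^ (p - 1) := by ring
    have hBmon : B ^ (p - 1) ≤ B ^ p :=
      Real.rpow_le_rpow_of_exponent_le hB1 (by linarith)
    calc p * (1 - s) * (D1 / (q + 1) + D2 / (s * p))
        ≤ 4 * A * B ^ (p - 1) + 2 * A * (1 - s) / s * B ^ (p - 1) := by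
          rw [mul_add]; exact add_le_add hstep1 hstep2
      _ = (4 * A + 2 * A * (1 - s) / s) * B ^ (p - 1) := by ring
      _ ≤ K * B ^ p := by
          have hc0 : 0 ≤ 4 * A + 2 * A * (1 - s) / s := by
            have := div_nonneg (by nlinarith : (0:ℝ) ≤ 2 * A * (1 - s)) hs0.le
            linarith
          have hBp0 : (0:ℝ) ≤ B ^ p := Real.rpow_nonneg (by linarith) p
          have := mul_le_mul_of_nonneg_left hBmon hc0
          rw [hKdef]
          nlinarith
  have hrpos : 0 < 1 / (s * p) := by positivity
  have hKBpos : 0 < K * B ^ p := by positivity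
  refine le_trans (ENNReal.rpow_le_rpow hbase hrpos.le) ?_
  rw [ENNReal.ofReal_rpow_of_pos hKBpos]
  refine ENNReal.ofReal_le_ofReal ?_
  rw [Real.mul_rpow (by linarith) (Real.rpow_nonneg (by linarith) p)]
  have h1 : (B ^ p) ^ (1 / (s * p)) = B ^ (1 / s) := by
    rw [← Real.rpow_mul (by linarith : (0:ℝ) ≤ B)]
    congr 1
    field_simp
  rw [h1]
  have h2 : K ^ (1 / (s * p)) ≤ K := by
    have := Real.rpow_le_rpow_of_exponent_le hK1
      (by rw [div_le_one (by linarith : (0:ℝ) < s * p)]; linarith : 1 / (s * p) ≤ 1)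
    rwa [Real.rpow_one] at this
  have h3 : (0:ℝ) ≤ B ^ (1 / s) := Real.rpow_nonneg (by linarith) _
  nlinarith [Real.rpow_nonneg (le_trans zero_le_one hK1 : (0:ℝ) ≤ K) (1 / (s * p))]
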